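/- arXiv:2303.06299 — 2 statements merged into one kernel-verified Lean document; each statement's English description precedes it below -/
import Mathlib

section
/- Let G be a graph with i-graph H containing an induced 4-cycle X, A, B, Y (with XY, AB non-edges of H). If X = {x₁, x₂, v₃, …, v_k}, then without loss of generality A = (X \ {x₁}) ∪ {y₁}, B = (X \ {x₂}) ∪ {y₂}, and Y = (X \ {x₁, x₂}) ∪ {y₁, y₂} for some vertices y₁, y₂ of G. -/
open Finset

variable {V : Type*}

/-- `S` is an independent dominating (equivalently, maximal independent) set of `G`. -/
def IndepDom (G : SimpleGraph V) (S : Finset V) : Prop :=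
  (∀ ⦃x⦄, x ∈ S → ∀ ⦃y⦄, y ∈ S → ¬ G.Adj x y) ∧ ∀ v, v ∉ S → ∃ u ∈ S, G.Adj u v

/-- The independent domination number `i(G)`. -/
noncomputable def iNum (G : SimpleGraph V) : ℕ :=
  sInf {n | ∃ S : Finset V, IndepDom G S ∧ S.card = n}

/-- An `i`-set: a maximal independent set of minimum cardinality. -/
def IsISet (G : SimpleGraph V) (S : Finset V) : Prop :=
  IndepDom G S ∧ S.card = iNum G

/-- The `i`-graph of `G`: vertices are the `i`-sets of `G`, two of them adjacent iff their
symmetric difference is a pair of adjacent vertices of `G`. -/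
def iGraph (G : SimpleGraph V) [DecidableEq V] : SimpleGraph {S : Finset V // IsISet G S} where
  Adj X Y := ∃ x y, G.Adj x y ∧ symmDiff X.1 Y.1 = {x, y}
  symm := by
    constructor
    rintro X Y ⟨x, y, hxy, h⟩
    exact ⟨x, y, hxy, by rwa [symmDiff_comm]⟩
  loopless := by
    constructor
    rintro X ⟨x, y, hxy, h⟩
    rw [symmDiff_self] at h
    exact (Finset.insert_ne_empty x {y}) (by simpa [eq_comm] using h)


lemma symmDiff_insert_erase' [DecidableEq V] {S : Finset V} {x y : V}
    (hx : x ∈ S) (hy : y ∉ S) : symmDiff S (insert y (S.erase x)) = {x, y} := by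
  ext v
  simp only [Finset.mem_symmDiff, Finset.mem_insert, Finset.mem_erase, Finset.mem_singleton]
  by_cases h1 : v = x <;> by_cases h2 : v = y <;> subst_vars <;> simp_all

lemma pair_case [DecidableEq V] {S T : Finset V} {x y : V}
    (hxy : x ≠ y) (h : symmDiff S T = {x, y}) (hc : S.card = T.card)
    (hxS : x ∈ S) (hxT : x ∉ T) :
    y ∈ T ∧ y ∉ S ∧ T = insert y (S.erase x) := by
  have hm : ∀ v, (v ∈ S ∧ v ∉ T ∨ v ∈ T ∧ v ∉ S) ↔ (v = x ∨ v = y) := by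
    intro v
    rw [← Finset.mem_symmDiff, h]
    simp
  have hy : y ∈ S ∧ y ∉ T ∨ y ∈ T ∧ y ∉ S := (hm y).mpr (Or.inr rfl)
  rcases hy with ⟨hyS, hyT⟩ | ⟨hyT, hyS⟩
  · exfalso
    have hTS : T ⊆ S := by
      intro v hv
      by_contra hvS
      rcases (hm v).mp (Or.inr ⟨hv, hvS⟩) with rfl | rfl
      · exact hxT hv
      · exact hyT hv
    have : T = S := Finset.eq_of_subset_of_card_le hTS hc.le
    subst this
    have := (hm x).mp (Or.inl ⟨hxS, hxT⟩)
    exact hxT hxS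
  · refine ⟨hyT, hyS, ?_⟩
    ext v
    simp only [Finset.mem_insert, Finset.mem_erase]
    constructor
    · intro hvT
      by_cases hvS : v ∈ S
      · right
        refine ⟨?_, hvS⟩
        rintro rfl; exact hxT hvT
      · rcases (hm v).mp (Or.inr ⟨hvT, hvS⟩) with rfl | rfl
        · exact absurd hxS hvS
        · exact Or.inl rfl
    · rintro (rfl | ⟨hne, hvS⟩)
      · exact hyT
      · by_contra hvT
        rcases (hm v).mp (Or.inl ⟨hvS, hvT⟩) with rfl | rfl
        · exact hne rfl
        · exact hyS hvS

lemma adj_struct [DecidableEq V] (G : SimpleGraph V) {X A : {S : Finset V // IsISet G S}}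
    (h : (iGraph G).Adj X A) :
    ∃ x y, G.Adj x y ∧ x ∈ X.1 ∧ x ∉ A.1 ∧ y ∈ A.1 ∧ y ∉ X.1 ∧
      A.1 = insert y (X.1.erase x) := by
  obtain ⟨p, q, hpq, hs⟩ := h
  have hc : X.1.card = A.1.card := X.2.2.trans A.2.2.symm
  have hm : p ∈ X.1 ∧ p ∉ A.1 ∨ p ∈ A.1 ∧ p ∉ X.1 := by
    have : p ∈ symmDiff X.1 A.1 := by rw [hs]; simp
    rwa [Finset.mem_symmDiff] at this
  rcases hm with ⟨h1, h2⟩ | ⟨h1, h2⟩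
  · obtain ⟨a, b, c⟩ := pair_case hpq.ne hs hc h1 h2
    exact ⟨p, q, hpq, h1, h2, a, b, c⟩
  · obtain ⟨hqX, hqA, hXeq⟩ := pair_case hpq.ne (by rwa [symmDiff_comm]) hc.symm h1 h2
    refine ⟨q, p, hpq.symm, hqX, hqA, h1, h2, ?_⟩
    rw [hXeq, Finset.erase_insert (by simp [hqA]), Finset.insert_erase h1]
/-- Structure of an induced `C₄` in an `i`-graph: if `X, A, B, Y` induce a 4-cycle with
`XY` and `AB` non-edges, then there are vertices `x₁, x₂ ∈ X` and `y₁, y₂` of `G` with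
`A = (X − x₁) ∪ {y₁}`, `B = (X − x₂) ∪ {y₂}` and `Y = (X − {x₁,x₂}) ∪ {y₁,y₂}`. -/
theorem iGraph_induced_C4 {V : Type*} [Fintype V] [DecidableEq V] (G : SimpleGraph V)
    (X A B Y : {S : Finset V // IsISet G S})
    (hXA : (iGraph G).Adj X A) (hXB : (iGraph G).Adj X B)
    (hAY : (iGraph G).Adj A Y) (hBY : (iGraph G).Adj B Y)
    (hXY : ¬ (iGraph G).Adj X Y) (hAB : ¬ (iGraph G).Adj A B)
    (hXYne : X ≠ Y) (hABne : A ≠ B) :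
    ∃ x₁ x₂ y₁ y₂ : V, x₁ ∈ X.1 ∧ x₂ ∈ X.1 ∧ x₁ ≠ x₂ ∧
      G.Adj x₁ y₁ ∧ G.Adj x₂ y₂ ∧
      A.1 = insert y₁ (X.1.erase x₁) ∧
      B.1 = insert y₂ (X.1.erase x₂) ∧
      Y.1 = insert y₁ (insert y₂ ((X.1.erase x₁).erase x₂)) := by
  obtain ⟨x₁, y₁, hadj1, hx1X, hx1A, hy1A, hy1X, hA⟩ := adj_struct G hXA
  obtain ⟨x₂, y₂, hadj2, hx2X, hx2B, hy2B, hy2X, hB⟩ := adj_struct G hXB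
  obtain ⟨a, b, hab, haA, haY, hbY, hbA, hY1⟩ := adj_struct G hAY
  obtain ⟨c, d, hcd, hcB, hcY, hdY, hdB, hY2⟩ := adj_struct G hBY
  -- Step 1 : a ≠ y₁
  have hay1 : a ≠ y₁ := by
    rintro rfl
    have hAe : A.1.erase a = X.1.erase x₁ := by
      rw [hA, Finset.erase_insert (by simp [hy1X])]
    rw [hAe] at hY1
    have hbx1 : b ≠ x₁ := by
      rintro rfl
      rw [Finset.insert_erase hx1X] at hY1
      exact hXYne (Subtype.ext hY1.symm)
    have hbX : b ∉ X.1 := by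
      intro hbX
      exact hbA (by rw [hA]; exact Finset.mem_insert_of_mem (Finset.mem_erase.2 ⟨hbx1, hbX⟩))
    obtain ⟨u, huX, hub⟩ := X.2.1.2 b hbX
    have hux : u = x₁ := by
      by_contra hux
      have huY : u ∈ Y.1 := by
        rw [hY1]; exact Finset.mem_insert_of_mem (Finset.mem_erase.2 ⟨hux, huX⟩)
      exact Y.2.1.1 huY hbY hub
    subst hux
    exact hXY ⟨u, b, hub, by rw [hY1]; exact symmDiff_insert_erase' huX hbX⟩
  -- a ∈ X, a ≠ x₁
  have haX : a ∈ X.1 ∧ a ≠ x₁ := by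
    have := haA
    rw [hA, Finset.mem_insert] at this
    rcases this with rfl | h
    · exact absurd rfl hay1
    · exact ⟨(Finset.mem_erase.1 h).2, (Finset.mem_erase.1 h).1⟩
  -- Step 2 : c ≠ y₂ (symmetric)
  have hcy2 : c ≠ y₂ := by
    rintro rfl
    have hBe : B.1.erase c = X.1.erase x₂ := by
      rw [hB, Finset.erase_insert (by simp [hy2X])]
    rw [hBe] at hY2
    have hdx2 : d ≠ x₂ := by
      rintro rfl
      rw [Finset.insert_erase hx2X] at hY2
      exact hXYne (Subtype.ext hY2.symm)
    have hdX : d ∉ X.1 := by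
      intro hdX
      exact hdB (by rw [hB]; exact Finset.mem_insert_of_mem (Finset.mem_erase.2 ⟨hdx2, hdX⟩))
    obtain ⟨u, huX, hud⟩ := X.2.1.2 d hdX
    have hux : u = x₂ := by
      by_contra hux
      have huY : u ∈ Y.1 := by
        rw [hY2]; exact Finset.mem_insert_of_mem (Finset.mem_erase.2 ⟨hux, huX⟩)
      exact Y.2.1.1 huY hdY hud
    subst hux
    exact hXY ⟨u, d, hud, by rw [hY2]; exact symmDiff_insert_erase' huX hdX⟩
  have hcX : c ∈ X.1 ∧ c ≠ x₂ := by
    have := hcB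
    rw [hB, Finset.mem_insert] at this
    rcases this with rfl | h
    · exact absurd rfl hcy2
    · exact ⟨(Finset.mem_erase.1 h).2, (Finset.mem_erase.1 h).1⟩
  -- Step 3 : b ∉ X, d ∉ X
  have hbX : b ∉ X.1 := by
    intro hbX
    have hbx1 : b = x₁ := by
      by_contra hbx1
      exact hbA (by rw [hA]; exact Finset.mem_insert_of_mem (Finset.mem_erase.2 ⟨hbx1, hbX⟩))
    subst hbx1
    have hbinY : b ∈ Y.1 := hbY
    have hy1Y : y₁ ∈ Y.1 := by
      rw [hY1]
      exact Finset.mem_insert_of_mem (Finset.mem_erase.2 ⟨fun h => hy1X (h ▸ haX.1), hy1A⟩)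
    exact Y.2.1.1 hbinY hy1Y hadj1
  have hdX : d ∉ X.1 := by
    intro hdX
    have hdx2 : d = x₂ := by
      by_contra hdx2
      exact hdB (by rw [hB]; exact Finset.mem_insert_of_mem (Finset.mem_erase.2 ⟨hdx2, hdX⟩))
    subst hdx2
    have hdinY : d ∈ Y.1 := hdY
    have hy2Y : y₂ ∈ Y.1 := by
      rw [hY2]
      exact Finset.mem_insert_of_mem (Finset.mem_erase.2 ⟨fun h => hy2X (h ▸ hcX.1), hy2B⟩)
    exact Y.2.1.1 hdinY hy2Y hadj2
  -- y₂ ∈ Y and its location via the first description of Y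
  have hy2Y : y₂ ∈ Y.1 := by
    rw [hY2]
    exact Finset.mem_insert_of_mem (Finset.mem_erase.2 ⟨fun h => hy2X (h ▸ hcX.1), hy2B⟩)
  have hy2loc : y₂ = b ∨ y₂ = y₁ := by
    have h := hy2Y
    rw [hY1, hA] at h
    simp only [Finset.mem_insert, Finset.mem_erase] at h
    rcases h with rfl | ⟨_, (rfl | ⟨_, h⟩)⟩
    · exact Or.inl rfl
    · exact Or.inr rfl
    · exact absurd h hy2X
  -- Step 4 : x₂ = a
  have hx2Y : x₂ ∉ Y.1 := by
    intro h
    rw [hY2, hB] at h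
    simp only [Finset.mem_insert, Finset.mem_erase] at h
    rcases h with rfl | ⟨_, (rfl | ⟨h1, _⟩)⟩
    · exact hdX hx2X
    · exact hy2X hx2X
    · exact h1 rfl
  have hx2a : x₂ = a := by
    have hloc : x₂ = a ∨ x₂ = x₁ := by
      by_contra hcon
      push_neg at hcon
      obtain ⟨h1, h2⟩ := hcon
      apply hx2Y
      rw [hY1, hA]
      exact Finset.mem_insert_of_mem (Finset.mem_erase.2
        ⟨h1, Finset.mem_insert_of_mem (Finset.mem_erase.2 ⟨h2, hx2X⟩)⟩)
    rcases hloc with h | h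
    · exact h
    · exfalso
      rcases hy2loc with rfl | rfl
      · -- y₂ = b : a and y₂ both in B, adjacent
        have haB : a ∈ B.1 := by
          rw [hB]
          exact Finset.mem_insert_of_mem (Finset.mem_erase.2 ⟨fun hh => haX.2 (hh ▸ h), haX.1⟩)
        exact B.2.1.1 haB hy2B hab
      · -- y₂ = y₁ : A = B
        apply hABne
        apply Subtype.ext
        rw [hA, hB, h]
    -- done
  have hx1x2 : x₁ ≠ x₂ := fun h => haX.2 (h ▸ hx2a).symm
  -- Step 5 : y₂ = b
  have hy2b : y₂ = b := by
    rcases hy2loc with h | h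
    · exact h
    · exfalso
      have hx2A : x₂ ∈ A.1 := by
        rw [hA]
        exact Finset.mem_insert_of_mem (Finset.mem_erase.2 ⟨fun hh => hx1x2 hh.symm, hx2X⟩)
      exact A.2.1.1 hx2A (h ▸ hy1A) (h ▸ hadj2)
  -- Conclusion
  refine ⟨x₁, x₂, y₁, y₂, hx1X, hx2X, hx1x2, hadj1, hadj2, hA, hB, ?_⟩
  rw [hY1, hA, ← hx2a, ← hy2b,
    Finset.erase_insert_of_ne (by rintro rfl; exact hy1X hx2X),
    Finset.insert_comm]
end

section
/- For any graph H there exists a graph G with ℐ(G) ≅ ℐ(H) such that for every i-set S of G and every v ∈ S, the external private neighbourhood epn(v,S) is nonempty. Specifically, if S is an i-set of H with v ∈ S and epn(v,S) = ∅, the graph G₁ obtained from H by adding two new vertices a, b each joined to every vertex of N[v] satisfies: the i-sets of G₁ are exactly the i-sets of H, i(G₁) = i(H), and epn_{G₁}(v,S) = {a,b}. -/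
open Finset

variable {V : Type*}

/-- The closed neighbourhood `N[v]` of `v`, as a set. -/
def closedNbr (G : SimpleGraph V) (v : V) : Set V := {u | u = v ∨ G.Adj v u}

/-- The private neighbourhood `pn(v,S) = N[v] − N[S − {v}]`. -/
def pn (G : SimpleGraph V) (v : V) (S : Finset V) : Set V :=
  closedNbr G v \ ⋃ w ∈ (S : Set V) \ {v}, closedNbr G w

/-- The external private neighbourhood `epn(v,S) = pn(v,S) − {v}`. -/
def epn (G : SimpleGraph V) (v : V) (S : Finset V) : Set V := pn G v S \ {v}

/-- The graph obtained from `H` by adding two new vertices each joined to every vertex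
of `N[v]`. -/
def addTwins (H : SimpleGraph V) (v : V) : SimpleGraph (V ⊕ Fin 2) where
  Adj a b := match a, b with
    | Sum.inl a, Sum.inl b => H.Adj a b
    | Sum.inl a, Sum.inr _ => a = v ∨ H.Adj a v
    | Sum.inr _, Sum.inl b => b = v ∨ H.Adj b v
    | Sum.inr _, Sum.inr _ => False
  symm := by constructor; rintro (a | i) (b | j) h
             · exact h.symm
             · exact h
             · exact h
             · exact h
  loopless := by constructor; rintro (a | i) h
                 · exact H.loopless.irrefl a h
                 · exact h

section Helpers

variable [Fintype V] [DecidableEq V]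

lemma exists_indepDom (G : SimpleGraph V) : ∃ S : Finset V, IndepDom G S := by
  classical
  obtain ⟨S, hS, hmax⟩ := Finset.exists_max_image
    (Finset.univ.powerset.filter (fun S : Finset V => ∀ x ∈ S, ∀ y ∈ S, ¬ G.Adj x y))
    Finset.card ⟨∅, by simp⟩
  refine ⟨S, fun x hx y hy => (Finset.mem_filter.mp hS).2 x hx y hy, ?_⟩
  intro u hu
  by_contra h
  push_neg at h
  have hins : insert u S ∈ Finset.univ.powerset.filter
      (fun S : Finset V => ∀ x ∈ S, ∀ y ∈ S, ¬ G.Adj x y) := by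
    simp only [Finset.mem_filter, Finset.mem_powerset] at hS ⊢
    refine ⟨Finset.subset_univ _, ?_⟩
    intro x hx y hy
    rcases Finset.mem_insert.mp hx with hx' | hx' <;>
      rcases Finset.mem_insert.mp hy with hy' | hy'
    · subst hx'; subst hy'; exact G.loopless.irrefl _
    · subst hx'; intro hadj; exact h y hy' hadj.symm
    · subst hy'; intro hadj; exact h x hx' hadj
    · exact hS.2 x hx' y hy'
  have h1 := hmax _ hins
  have h2 : S.card < (insert u S).card := by
    rw [Finset.card_insert_of_notMem hu]; omega
  omega

lemma iNum_spec (G : SimpleGraph V) : ∃ S : Finset V, IndepDom G S ∧ S.card = iNum G := by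
  have h : {n | ∃ S : Finset V, IndepDom G S ∧ S.card = n}.Nonempty := by
    obtain ⟨S, hS⟩ := exists_indepDom G
    exact ⟨S.card, S, hS, rfl⟩
  exact Nat.sInf_mem h

omit [Fintype V] [DecidableEq V] in
lemma iNum_le {G : SimpleGraph V} {S : Finset V} (h : IndepDom G S) : iNum G ≤ S.card :=
  Nat.sInf_le ⟨S, h, rfl⟩

end Helpers

section Twins

set_option linter.unusedSectionVars false

variable [Fintype V] [DecidableEq V] (H : SimpleGraph V) (v : V)

lemma indepDom_image {T₀ : Finset V} (h : IndepDom H T₀) :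
    IndepDom (addTwins H v) (T₀.image Sum.inl) := by
  constructor
  · rintro x hx y hy hadj
    simp only [Finset.mem_image] at hx hy
    obtain ⟨x₀, hx₀, rfl⟩ := hx
    obtain ⟨y₀, hy₀, rfl⟩ := hy
    exact h.1 hx₀ hy₀ hadj
  · rintro (u | j) hu
    · have hu' : u ∉ T₀ := fun h' => hu (Finset.mem_image_of_mem _ h')
      obtain ⟨w, hw, hadj⟩ := h.2 u hu'
      exact ⟨Sum.inl w, Finset.mem_image_of_mem _ hw, hadj⟩
    · by_cases hv : v ∈ T₀
      · exact ⟨Sum.inl v, Finset.mem_image_of_mem _ hv, Or.inl rfl⟩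
      · obtain ⟨w, hw, hadj⟩ := h.2 v hv
        exact ⟨Sum.inl w, Finset.mem_image_of_mem _ hw, Or.inr hadj⟩

lemma inr_mem_both {T : Finset (V ⊕ Fin 2)} (h : IndepDom (addTwins H v) T)
    {j : Fin 2} (hj : Sum.inr j ∈ T) (k : Fin 2) : Sum.inr k ∈ T := by
  by_contra hk
  obtain ⟨w, hw, hadj⟩ := h.2 _ hk
  match w with
  | Sum.inl u => exact h.1 hw hj hadj
  | Sum.inr m => exact hadj

lemma eq_image_of_no_inr {T : Finset (V ⊕ Fin 2)} (h : IndepDom (addTwins H v) T)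
    (hno : ∀ j : Fin 2, Sum.inr j ∉ T) :
    ∃ T₀ : Finset V, IndepDom H T₀ ∧ T = T₀.image Sum.inl := by
  classical
  refine ⟨T.preimage Sum.inl Sum.inl_injective.injOn, ⟨?_, ?_⟩, ?_⟩
  · intro x hx y hy hadj
    rw [Finset.mem_preimage] at hx hy
    exact h.1 hx hy hadj
  · intro u hu
    rw [Finset.mem_preimage] at hu
    obtain ⟨w, hw, hadj⟩ := h.2 (Sum.inl u) hu
    match w with
    | Sum.inl w₀ => exact ⟨w₀, Finset.mem_preimage.mpr hw, hadj⟩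
    | Sum.inr m => exact absurd hw (hno m)
  · ext x
    simp only [Finset.mem_image, Finset.mem_preimage]
    constructor
    · intro hx
      match x with
      | Sum.inl x₀ => exact ⟨x₀, hx, rfl⟩
      | Sum.inr m => exact absurd hx (hno m)
    · rintro ⟨x₀, hx₀, rfl⟩; exact hx₀

lemma card_ge_of_inr_mem {T : Finset (V ⊕ Fin 2)} (h : IndepDom (addTwins H v) T)
    {j : Fin 2} (hj : Sum.inr j ∈ T) : iNum H + 1 ≤ T.card := by
  classical
  set T₀ := T.preimage Sum.inl Sum.inl_injective.injOn with hT₀def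
  have hmemT₀ : ∀ u, u ∈ T₀ ↔ Sum.inl u ∈ T := fun u => Finset.mem_preimage
  have hNv : ∀ u ∈ T₀, ¬ (u = v ∨ H.Adj u v) := by
    intro u hu hadj
    exact h.1 ((hmemT₀ u).mp hu) hj hadj
  have hvT₀ : v ∉ T₀ := fun hv => hNv v hv (Or.inl rfl)
  -- T₁ := insert v T₀ is IndepDom in H
  have hT₁ : IndepDom H (insert v T₀) := by
    constructor
    · intro x hx y hy
      rcases Finset.mem_insert.mp hx with hx' | hx' <;>
        rcases Finset.mem_insert.mp hy with hy' | hy'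
      · subst hx'; subst hy'; exact H.loopless.irrefl _
      · subst hx'; intro hadj; exact hNv y hy' (Or.inr hadj.symm)
      · subst hy'; intro hadj; exact hNv x hx' (Or.inr hadj)
      · exact h.1 ((hmemT₀ x).mp hx') ((hmemT₀ y).mp hy')
    · intro u hu
      have huv : u ≠ v := fun h' => hu (h' ▸ Finset.mem_insert_self _ _)
      have huT₀ : u ∉ T₀ := fun h' => hu (Finset.mem_insert_of_mem h')
      by_cases hadj : H.Adj v u
      · exact ⟨v, Finset.mem_insert_self _ _, hadj⟩
      · obtain ⟨w, hw, hadjw⟩ := h.2 (Sum.inl u) (fun h' => huT₀ ((hmemT₀ u).mpr h'))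
        match w with
        | Sum.inl w₀ => exact ⟨w₀, Finset.mem_insert_of_mem ((hmemT₀ w₀).mpr hw), hadjw⟩
        | Sum.inr m =>
          rcases (hadjw : u = v ∨ H.Adj u v) with h' | h'
          · exact absurd h' huv
          · exact absurd h'.symm hadj
  -- card bound
  set k : Fin 2 := if j = 0 then 1 else 0 with hkdef
  have hjk : j ≠ k := by
    rcases Fin.exists_fin_two.mp ⟨j, rfl⟩ with h | h <;> simp [hkdef, h] <;> decide
  have hk : Sum.inr k ∈ T := inr_mem_both H v h hj k
  have hsub : insert (Sum.inr j) (insert (Sum.inr k) (T₀.image Sum.inl)) ⊆ T := by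
    intro x hx
    rcases Finset.mem_insert.mp hx with rfl | hx
    · exact hj
    rcases Finset.mem_insert.mp hx with rfl | hx
    · exact hk
    obtain ⟨x₀, hx₀, rfl⟩ := Finset.mem_image.mp hx
    exact (hmemT₀ x₀).mp hx₀
  have hninl : ∀ m : Fin 2, (Sum.inr m : V ⊕ Fin 2) ∉ T₀.image Sum.inl := by
    intro m hm
    obtain ⟨x₀, _, h'⟩ := Finset.mem_image.mp hm
    exact Sum.inl_ne_inr h'
  have hcard : T₀.card + 2 ≤ T.card := by
    have h1 := Finset.card_le_card hsub
    rw [Finset.card_insert_of_notMem, Finset.card_insert_of_notMem (hninl k),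
      Finset.card_image_of_injective _ Sum.inl_injective] at h1
    · omega
    · intro hmem
      rcases Finset.mem_insert.mp hmem with h' | h'
      · exact hjk (by injection h')
      · exact hninl j h'
  have := iNum_le hT₁
  rw [Finset.card_insert_of_notMem hvT₀] at this
  omega

end Twins

section Twins2

set_option linter.unusedSectionVars false
set_option linter.unreachableTactic false
set_option linter.unusedTactic false

variable [Fintype V] [DecidableEq V] (H : SimpleGraph V) (v : V)

lemma iNum_addTwins : iNum (addTwins H v) = iNum H := by
  apply le_antisymm
  · obtain ⟨S₀, hS₀, hcard⟩ := iNum_spec H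
    have h := iNum_le (indepDom_image H v hS₀)
    rwa [Finset.card_image_of_injective _ Sum.inl_injective, hcard] at h
  · obtain ⟨T, hT, hcard⟩ := iNum_spec (addTwins H v)
    rw [← hcard]
    by_cases hin : ∃ j, Sum.inr j ∈ T
    · obtain ⟨j, hj⟩ := hin
      have := card_ge_of_inr_mem H v hT hj
      omega
    · push_neg at hin
      obtain ⟨T₀, hT₀, rfl⟩ := eq_image_of_no_inr H v hT hin
      rw [Finset.card_image_of_injective _ Sum.inl_injective]
      exact iNum_le hT₀

lemma isISet_addTwins_iff {T : Finset (V ⊕ Fin 2)} :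
    IsISet (addTwins H v) T ↔ ∃ T₀ : Finset V, IsISet H T₀ ∧ T = T₀.image Sum.inl := by
  constructor
  · rintro ⟨hT, hcard⟩
    rw [iNum_addTwins] at hcard
    have hno : ∀ j, Sum.inr j ∉ T := by
      intro j hj
      have := card_ge_of_inr_mem H v hT hj
      omega
    obtain ⟨T₀, hT₀, rfl⟩ := eq_image_of_no_inr H v hT hno
    refine ⟨T₀, ⟨hT₀, ?_⟩, rfl⟩
    rwa [Finset.card_image_of_injective _ Sum.inl_injective] at hcard
  · rintro ⟨T₀, ⟨hT₀, hc⟩, rfl⟩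
    exact ⟨indepDom_image H v hT₀,
      by rw [Finset.card_image_of_injective _ Sum.inl_injective, hc, iNum_addTwins]⟩

lemma mem_union_closed_iff {T₀ : Finset V} {u : V} {x : V ⊕ Fin 2} :
    x ∈ ⋃ w ∈ ((T₀.image Sum.inl : Finset (V ⊕ Fin 2)) : Set (V ⊕ Fin 2)) \ {Sum.inl u},
        closedNbr (addTwins H v) w ↔
      ∃ w₀ ∈ T₀, w₀ ≠ u ∧ x ∈ closedNbr (addTwins H v) (Sum.inl w₀) := by
  simp only [Set.mem_iUnion, exists_prop, Set.mem_diff, Finset.coe_image, Set.mem_image,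
    Finset.mem_coe, Set.mem_singleton_iff]
  constructor
  · rintro ⟨w, ⟨⟨w₀, hw₀, rfl⟩, hne⟩, hx⟩
    exact ⟨w₀, hw₀, fun h => hne (by rw [h]), hx⟩
  · rintro ⟨w₀, hw₀, hne, hx⟩
    exact ⟨Sum.inl w₀, ⟨⟨w₀, hw₀, rfl⟩, fun h => hne (Sum.inl_injective h)⟩, hx⟩

lemma mem_closed_inl_iff {u x : V} :
    (Sum.inl x : V ⊕ Fin 2) ∈ closedNbr (addTwins H v) (Sum.inl u) ↔ x ∈ closedNbr H u := by
  simp only [closedNbr, Set.mem_setOf_eq, Sum.inl.injEq]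
  rfl

lemma mem_union_closed_iff' {T₀ : Finset V} {u x : V} :
    x ∈ ⋃ w ∈ ((T₀ : Set V) \ {u}), closedNbr H w ↔
      ∃ w₀ ∈ T₀, w₀ ≠ u ∧ x ∈ closedNbr H w₀ := by
  simp only [Set.mem_iUnion, exists_prop, Set.mem_diff, Finset.mem_coe, Set.mem_singleton_iff]
  tauto

lemma mem_epn_inl {T₀ : Finset V} {u x : V} :
    Sum.inl x ∈ epn (addTwins H v) (Sum.inl u) (T₀.image Sum.inl) ↔ x ∈ epn H u T₀ := by
  rw [epn, epn, pn, pn, Set.mem_diff, Set.mem_diff, Set.mem_diff, Set.mem_diff,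
    mem_union_closed_iff H v, mem_union_closed_iff' H, mem_closed_inl_iff H v]
  simp only [Set.mem_singleton_iff, Sum.inl.injEq, mem_closed_inl_iff H v]

lemma epn_addTwins {S : Finset V} (hS : IndepDom H S) (hv : v ∈ S) (h0 : epn H v S = ∅) :
    epn (addTwins H v) (Sum.inl v) (S.image Sum.inl) = {Sum.inr 0, Sum.inr 1} := by
  ext x
  constructor
  · intro hx
    match x with
    | Sum.inl x₀ =>
      exfalso
      have : x₀ ∈ epn H v S := (mem_epn_inl H v).mp hx
      rw [h0] at this
      exact this
    | Sum.inr j =>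
      rcases Fin.exists_fin_two.mp ⟨j, rfl⟩ with h | h <;> subst h <;> simp
  · intro hx
    have hxj : ∃ j : Fin 2, x = Sum.inr j := by
      rcases Set.mem_insert_iff.mp hx with h | h
      · exact ⟨0, h⟩
      · exact ⟨1, Set.mem_singleton_iff.mp h⟩
    obtain ⟨j, rfl⟩ := hxj
    refine ⟨⟨Or.inr (Or.inl rfl), ?_⟩, ?_⟩
    · rw [mem_union_closed_iff]
      rintro ⟨w₀, hw₀, hne, hcl⟩
      rcases hcl with h | h
      · exact Sum.inr_ne_inl h
      · rcases (h : w₀ = v ∨ H.Adj w₀ v) with h' | h'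
        · exact hne h'
        · exact hS.1 hw₀ hv h'
    · simp

end Twins2

section Iso

set_option linter.unusedSectionVars false

variable [Fintype V] [DecidableEq V] (H : SimpleGraph V) (v : V)

noncomputable def addTwinsEquiv :
    {T₀ : Finset V // IsISet H T₀} ≃ {T : Finset (V ⊕ Fin 2) // IsISet (addTwins H v) T} :=
  Equiv.ofBijective
    (fun A => ⟨A.1.image Sum.inl, (isISet_addTwins_iff H v).mpr ⟨A.1, A.2, rfl⟩⟩)
    ⟨by
      rintro ⟨A, hA⟩ ⟨B, hB⟩ h
      simp only [Subtype.mk.injEq] at h ⊢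
      exact Finset.image_injective Sum.inl_injective h,
     by
      rintro ⟨T, hT⟩
      obtain ⟨T₀, h₀, rfl⟩ := (isISet_addTwins_iff H v).mp hT
      exact ⟨⟨T₀, h₀⟩, rfl⟩⟩

noncomputable def addTwinsIso : iGraph H ≃g iGraph (addTwins H v) where
  toEquiv := addTwinsEquiv H v
  map_rel_iff' := by
    rintro ⟨A, hA⟩ ⟨B, hB⟩
    have hinj : Function.Injective (Sum.inl : V → V ⊕ Fin 2) := Sum.inl_injective
    show (iGraph (addTwins H v)).Adj ⟨A.image Sum.inl, _⟩ ⟨B.image Sum.inl, _⟩ ↔ _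
    constructor
    · rintro ⟨x, y, hxy, hsd⟩
      rw [← Finset.image_symmDiff A B hinj] at hsd
      have hx : x ∈ (symmDiff A B).image Sum.inl := by rw [hsd]; simp
      have hy : y ∈ (symmDiff A B).image Sum.inl := by
        rw [hsd]; simp
      obtain ⟨x₀, _, rfl⟩ := Finset.mem_image.mp hx
      obtain ⟨y₀, _, rfl⟩ := Finset.mem_image.mp hy
      refine ⟨x₀, y₀, hxy, ?_⟩
      apply Finset.image_injective hinj
      rw [hsd, Finset.image_insert, Finset.image_singleton]
    · rintro ⟨x, y, hxy, hsd⟩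
      refine ⟨Sum.inl x, Sum.inl y, hxy, ?_⟩
      rw [← Finset.image_symmDiff A B hinj, hsd, Finset.image_insert,
        Finset.image_singleton]

end Iso

noncomputable def badPairs [Fintype V] [DecidableEq V] (G : SimpleGraph V) :
    Finset (Finset V × V) :=
  @Finset.filter _ (fun p => IsISet G p.1 ∧ p.2 ∈ p.1 ∧ epn G p.2 p.1 = ∅)
    (Classical.decPred _) Finset.univ

lemma mem_badPairs [Fintype V] [DecidableEq V] {G : SimpleGraph V} {p : Finset V × V} :
    p ∈ badPairs G ↔ IsISet G p.1 ∧ p.2 ∈ p.1 ∧ epn G p.2 p.1 = ∅ := by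
  rw [badPairs, @Finset.mem_filter _ _ (Classical.decPred _) _ _]
  exact and_iff_right (Finset.mem_univ _)

section Dec

set_option linter.unusedSectionVars false

variable [Fintype V] [DecidableEq V] (H : SimpleGraph V) (v : V)

lemma badPairs_card_lt {S : Finset V} (hS : IsISet H S) (hv : v ∈ S) (h0 : epn H v S = ∅) :
    (badPairs (addTwins H v)).card < (badPairs H).card := by
  have hmem : (S, v) ∈ badPairs H := mem_badPairs.mpr ⟨hS, hv, h0⟩
  have hsub : badPairs (addTwins H v) ⊆
      ((badPairs H).erase (S, v)).image (fun p => (p.1.image Sum.inl, Sum.inl p.2)) := by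
    rintro ⟨T, w⟩ hp
    obtain ⟨hp1, hp2, hp3⟩ := mem_badPairs.mp hp
    obtain ⟨T₀, hT₀, rfl⟩ := (isISet_addTwins_iff H v).mp hp1
    obtain ⟨w₀, hw₀, rfl⟩ := Finset.mem_image.mp hp2
    have hepn0 : epn H w₀ T₀ = ∅ := by
      ext x
      simp only [Set.mem_empty_iff_false, iff_false]
      intro hx
      have := (mem_epn_inl H v).mpr hx
      rw [hp3] at this
      exact this
    have hne : (T₀, w₀) ≠ (S, v) := by
      intro h
      have h1 : T₀ = S := congrArg Prod.fst h
      have h2 : w₀ = v := congrArg Prod.snd h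
      subst h1; subst h2
      rw [epn_addTwins H w₀ hS.1 hv h0] at hp3
      have : (Sum.inr 0 : V ⊕ Fin 2) ∈ (∅ : Set (V ⊕ Fin 2)) := by
        rw [← hp3]; simp
      exact this
    exact Finset.mem_image.mpr ⟨(T₀, w₀), Finset.mem_erase.mpr ⟨hne, mem_badPairs.mpr
      ⟨hT₀, hw₀, hepn0⟩⟩, rfl⟩
  have h1 : (badPairs (addTwins H v)).card ≤ ((badPairs H).erase (S, v)).card :=
    le_trans (Finset.card_le_card hsub) Finset.card_image_le
  have h3 := Finset.card_erase_of_mem hmem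
  have h4 : 1 ≤ (badPairs H).card := Finset.card_pos.mpr ⟨_, hmem⟩
  omega

end Dec

set_option maxHeartbeats 1000000 in
lemma main_ind (n : ℕ) : ∀ (V : Type) [Fintype V] [DecidableEq V] (H : SimpleGraph V),
    (badPairs H).card ≤ n →
    ∃ (W : Type) (_ : Fintype W) (_ : DecidableEq W) (G : SimpleGraph W),
       Nonempty (iGraph G ≃g iGraph H) ∧
       ∀ S : Finset W, IsISet G S → ∀ v ∈ S, (epn G v S).Nonempty := by
  induction n with
  | zero =>
    intro V _ _ H hcard
    refine ⟨V, ‹_›, ‹_›, H, ⟨SimpleGraph.Iso.refl⟩, ?_⟩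
    intro S hS v hv
    rw [Set.nonempty_iff_ne_empty]
    intro h0
    have : (S, v) ∈ badPairs H := mem_badPairs.mpr ⟨hS, hv, h0⟩
    have := Finset.card_pos.mpr ⟨_, this⟩
    omega
  | succ n ih =>
    intro V _ _ H hcard
    by_cases hle : (badPairs H).card ≤ n
    · exact ih V H hle
    · have hpos : 0 < (badPairs H).card := by omega
      obtain ⟨⟨S, v⟩, hmem⟩ := Finset.card_pos.mp hpos
      obtain ⟨hS, hv, h0⟩ := mem_badPairs.mp hmem
      have hlt := badPairs_card_lt H v hS hv h0
      obtain ⟨W, fW, dW, G, ⟨φ⟩, hG⟩ := ih (V ⊕ Fin 2) (addTwins H v) (by omega)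
      exact ⟨W, fW, dW, G, ⟨φ.trans (addTwinsIso H v).symm⟩, hG⟩

/-- For any graph `H` there is a graph `G` with the same `i`-graph all of whose `i`-sets
have every vertex with nonempty external private neighbourhood; moreover if `v ∈ S` is an
`i`-set vertex with `epn(v,S) = ∅`, the graph `addTwins H v` has exactly the `i`-sets of `H`
(pushed forward along `Sum.inl`), the same `i`-number, and `epn(v,S) = {a,b}` there. -/
theorem epn_add (V : Type) [Fintype V] [DecidableEq V] (H : SimpleGraph V) :
    (∃ (W : Type) (_ : Fintype W) (_ : DecidableEq W) (G : SimpleGraph W),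
       Nonempty (iGraph G ≃g iGraph H) ∧
       ∀ S : Finset W, IsISet G S → ∀ v ∈ S, (epn G v S).Nonempty) ∧
    (∀ (S : Finset V) (v : V), IsISet H S → v ∈ S → epn H v S = ∅ →
       (∀ T : Finset (V ⊕ Fin 2),
          IsISet (addTwins H v) T ↔ ∃ T₀ : Finset V, IsISet H T₀ ∧ T = T₀.image Sum.inl) ∧
       iNum (addTwins H v) = iNum H ∧
       epn (addTwins H v) (Sum.inl v) (S.image Sum.inl) = {Sum.inr 0, Sum.inr 1}) := by
  constructor
  · exact main_ind (badPairs H).card V H le_rfl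
  · intro S v hS hv h0
    exact ⟨fun T => isISet_addTwins_iff H v, iNum_addTwins H v, epn_addTwins H v hS.1 hv h0⟩
end
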